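/- Assume positivity: 0 < p(X) < 1 μ-a.s. where p∘X is a version of E_μ[1_{S=1} | σ(X)], and define the true selection-model offset a(x) = ln((1 − p(x))/p(x)) − ln c(x). Then the selection-model weighted loss recovers the tilted g-formula functional: (1/μ(S=0)) · E_μ[ 1_{S=1} · e^{a(X) + η q(Y)} · W ] = E_{μ₀}[ b(X) ]. -/

import Mathlib

open MeasureTheory ProbabilityTheory Real
open scoped ENNReal

private lemma integral_cond_eq' {Ω : Type*} [MeasurableSpace Ω] (μ : Measure Ω)
    (s : Set Ω) (f : Ω → ℝ) :
    ∫ ω, f ω ∂(μ[|s]) = (μ s).toReal⁻¹ * ∫ ω in s, f ω ∂μ := by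
  rw [ProbabilityTheory.cond, integral_smul_measure, ENNReal.toReal_inv, smul_eq_mul]

private lemma integrable_cond_iff' {Ω : Type*} [MeasurableSpace Ω] {μ : Measure Ω}
    {s : Set Ω} (hs0 : μ s ≠ 0) (hs : μ s ≠ ∞) (f : Ω → ℝ) :
    Integrable f (μ[|s]) ↔ Integrable f (μ.restrict s) := by
  rw [ProbabilityTheory.cond]
  exact integrable_smul_measure (by simpa using hs) (by simpa using hs0)

/-- Case 2 of the double-robustness Theorem 3 (selection-model parameterization), first
part: with the true selection-model offset `a(x) = ln((1 − p(x))/p(x)) − ln c(x)`, the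
selection-model weighted loss recovers the tilted g-formula functional:
`(1/μ(S=0)) E_μ[1_{S=1} e^{a(X) + η q(Y)} W] = E_{μ₀}[b(X)]`. -/
theorem selection_model_weighting_recovers_gformula
    {Ω : Type*} [MeasurableSpace Ω] {𝒳 : Type*} [MeasurableSpace 𝒳]
    (μ : Measure Ω) [IsProbabilityMeasure μ]
    (X : Ω → 𝒳) (Y : Ω → ℝ) (S : Ω → Bool)
    (hX : Measurable X) (hY : Measurable Y) (hS : Measurable S)
    (hS1 : 0 < μ {ω | S ω = true}) (hS0 : 0 < μ {ω | S ω = false})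
    (η : ℝ) (q : ℝ → ℝ) (hq : Measurable q)
    (ℓ : 𝒳 → ℝ → ℝ) (hℓ : Measurable (Function.uncurry ℓ))
    (c r : 𝒳 → ℝ) (hc : Measurable c) (hr : Measurable r)
    (hexp_int : Integrable (fun ω => Real.exp (η * q (Y ω))) (μ[|{ω | S ω = true}]))
    (hWexp_int : Integrable (fun ω => ℓ (X ω) (Y ω) * Real.exp (η * q (Y ω)))
      (μ[|{ω | S ω = true}]))
    (hcver : (fun ω => c (X ω)) =ᵐ[μ[|{ω | S ω = true}]]
      (μ[|{ω | S ω = true}])[fun ω => Real.exp (η * q (Y ω)) |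
        MeasurableSpace.comap X inferInstance])
    (hcpos : ∀ᵐ ω ∂(μ[|{ω | S ω = true}]), 0 < c (X ω))
    (hrver : (fun ω => r (X ω)) =ᵐ[μ[|{ω | S ω = true}]]
      (μ[|{ω | S ω = true}])[fun ω => ℓ (X ω) (Y ω) * Real.exp (η * q (Y ω)) |
        MeasurableSpace.comap X inferInstance])
    -- the true propensity, with positivity 0 < p(X) < 1 μ-a.s.
    (p : 𝒳 → ℝ) (hp : Measurable p)
    (hpver : (fun ω => p (X ω)) =ᵐ[μ]
      μ[fun ω => if S ω then (1 : ℝ) else 0 | MeasurableSpace.comap X inferInstance])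
    (hppos : ∀ᵐ ω ∂μ, 0 < p (X ω) ∧ p (X ω) < 1)
    -- the true selection-model offset
    (a : 𝒳 → ℝ)
    (ha : ∀ x, a x = Real.log ((1 - p x) / p x) - Real.log (c x))
    (hb_int₀ : Integrable (fun ω => r (X ω) / c (X ω)) (μ[|{ω | S ω = false}]))
    (hwt_int : Integrable (fun ω =>
      if S ω then Real.exp (a (X ω) + η * q (Y ω)) * ℓ (X ω) (Y ω) else 0) μ) :
    (μ {ω | S ω = false}).toReal⁻¹
      * ∫ ω, (if S ω then Real.exp (a (X ω) + η * q (Y ω)) * ℓ (X ω) (Y ω) else 0) ∂μ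
      = ∫ ω, r (X ω) / c (X ω) ∂(μ[|{ω | S ω = false}]) := by
  -- basic set facts
  set s1 : Set Ω := {ω | S ω = true} with hs1def
  set s0 : Set Ω := {ω | S ω = false} with hs0def
  have hms1 : MeasurableSet s1 := hS (measurableSet_singleton true)
  have hms0 : MeasurableSet s0 := hS (measurableSet_singleton false)
  have hne1 : μ s1 ≠ 0 := hS1.ne'
  have hne0 : μ s0 ≠ 0 := hS0.ne'
  have hfin1 : μ s1 ≠ ∞ := measure_ne_top μ s1
  have hfin0 : μ s0 ≠ ∞ := measure_ne_top μ s0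
  have htr1 : (μ s1).toReal ≠ 0 := ENNReal.toReal_ne_zero.mpr ⟨hne1, hfin1⟩
  have htr0 : (μ s0).toReal ≠ 0 := ENNReal.toReal_ne_zero.mpr ⟨hne0, hfin0⟩
  have hm : MeasurableSpace.comap X inferInstance ≤ ‹MeasurableSpace Ω› := hX.comap_le
  haveI : IsProbabilityMeasure (μ[|s1]) := cond_isProbabilityMeasure hne1
  have hXm : Measurable[MeasurableSpace.comap X inferInstance] X := measurable_iff_comap_le.mpr le_rfl
  have comp_sm : ∀ {f : 𝒳 → ℝ}, Measurable f →
      StronglyMeasurable[MeasurableSpace.comap X inferInstance] fun ω => f (X ω) :=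
    fun hf => (hf.comp hXm).stronglyMeasurable
  -- step 1: rewrite the weighted integrand
  have hae1 : (fun ω => if S ω then Real.exp (a (X ω) + η * q (Y ω)) * ℓ (X ω) (Y ω) else 0)
      =ᵐ[μ] s1.indicator (fun ω => (1 - p (X ω)) / (p (X ω) * c (X ω))
        * (ℓ (X ω) (Y ω) * Real.exp (η * q (Y ω)))) := by
    have hc' : ∀ᵐ ω ∂μ, ω ∈ s1 → 0 < c (X ω) := by
      have h := hcpos
      rw [ProbabilityTheory.cond, Measure.ae_ennreal_smul_measure_iff (by simpa using hfin1)] at h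
      exact (ae_restrict_iff' hms1).mp h
    filter_upwards [hppos, hc'] with ω hpω hcω
    by_cases hsw : S ω = true
    · have hmem : ω ∈ s1 := hsw
      have h1 : 0 < (1 - p (X ω)) / p (X ω) := div_pos (by linarith [hpω.2]) hpω.1
      rw [if_pos hsw, Set.indicator_of_mem hmem, ha, Real.exp_add, Real.exp_sub,
        Real.exp_log h1, Real.exp_log (hcω hmem)]
      field_simp
    · rw [if_neg hsw, Set.indicator_of_notMem (by exact hsw)]
  -- integrability of the weighted integrand under μ₁
  have hFWE_int : Integrable (fun ω => (1 - p (X ω)) / (p (X ω) * c (X ω))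
      * (ℓ (X ω) (Y ω) * Real.exp (η * q (Y ω)))) (μ[|s1]) := by
    rw [integrable_cond_iff' hne1 hfin1]
    exact (integrable_indicator_iff hms1).mp (hwt_int.congr hae1)
  -- tower property under μ₁
  have hFsm : StronglyMeasurable[MeasurableSpace.comap X inferInstance] fun ω => (1 - p (X ω)) / (p (X ω) * c (X ω)) :=
    comp_sm (((measurable_const.sub hp)).div (hp.mul hc))
  have htower := condExp_mul_of_stronglyMeasurable_left (μ := μ[|s1]) (m := MeasurableSpace.comap X inferInstance) hFsm
    (f := fun ω => (1 - p (X ω)) / (p (X ω) * c (X ω)))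
    (g := fun ω => ℓ (X ω) (Y ω) * Real.exp (η * q (Y ω)))
    hFWE_int hWexp_int
  have hcond_ae : ((μ[|s1])[(fun ω => (1 - p (X ω)) / (p (X ω) * c (X ω)))
      * (fun ω => ℓ (X ω) (Y ω) * Real.exp (η * q (Y ω))) | MeasurableSpace.comap X inferInstance])
      =ᵐ[μ[|s1]] fun ω => (1 - p (X ω)) / p (X ω) * (r (X ω) / c (X ω)) := by
    filter_upwards [htower, hrver] with ω h1 h2
    rw [h1, Pi.mul_apply, ← h2]
    ring
  have hFr_int : Integrable (fun ω => (1 - p (X ω)) / p (X ω) * (r (X ω) / c (X ω)))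
      (μ[|s1]) := integrable_condExp.congr hcond_ae
  have hI2 : ∫ ω, (1 - p (X ω)) / (p (X ω) * c (X ω))
        * (ℓ (X ω) (Y ω) * Real.exp (η * q (Y ω))) ∂(μ[|s1])
      = ∫ ω, (1 - p (X ω)) / p (X ω) * (r (X ω) / c (X ω)) ∂(μ[|s1]) := by
    calc ∫ ω, (1 - p (X ω)) / (p (X ω) * c (X ω))
            * (ℓ (X ω) (Y ω) * Real.exp (η * q (Y ω))) ∂(μ[|s1])
        = ∫ ω, ((μ[|s1])[(fun ω => (1 - p (X ω)) / (p (X ω) * c (X ω)))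
            * (fun ω => ℓ (X ω) (Y ω) * Real.exp (η * q (Y ω))) | MeasurableSpace.comap X inferInstance]) ω ∂(μ[|s1]) :=
          (integral_condExp hm).symm
      _ = _ := integral_congr_ae hcond_ae
  -- move back to μ: the integrand as an indicator
  have hGind_int : Integrable (s1.indicator fun ω =>
      (1 - p (X ω)) / p (X ω) * (r (X ω) / c (X ω))) μ := by
    rw [integrable_indicator_iff hms1]
    rw [integrable_cond_iff' hne1 hfin1] at hFr_int
    exact hFr_int
  have hind_eq : (s1.indicator fun ω => (1 - p (X ω)) / p (X ω) * (r (X ω) / c (X ω)))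
      = fun ω => (1 - p (X ω)) / p (X ω) * (r (X ω) / c (X ω))
          * (if S ω then (1:ℝ) else 0) := by
    funext ω
    by_cases h : S ω = true <;>
      simp [Set.indicator_apply, hs1def, Set.mem_setOf_eq, h]
  have h1S_int : Integrable (fun ω => if S ω then (1:ℝ) else 0) μ := by
    refine ((integrable_const (1:ℝ)).indicator hms1).congr (ae_of_all _ fun ω => ?_)
    by_cases h : S ω = true <;>
      simp [Set.indicator_apply, hs1def, Set.mem_setOf_eq, h]
  have hGS_int : Integrable ((fun ω => (1 - p (X ω)) / p (X ω) * (r (X ω) / c (X ω)))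
      * fun ω => if S ω then (1:ℝ) else 0) μ := by
    have := hind_eq ▸ hGind_int
    exact this
  have hGsm : StronglyMeasurable[MeasurableSpace.comap X inferInstance] fun ω => (1 - p (X ω)) / p (X ω) * (r (X ω) / c (X ω)) :=
    comp_sm (((measurable_const.sub hp).div hp).mul (hr.div hc))
  have htower2 := condExp_mul_of_stronglyMeasurable_left (μ := μ) (m := MeasurableSpace.comap X inferInstance) hGsm
    (f := fun ω => (1 - p (X ω)) / p (X ω) * (r (X ω) / c (X ω)))
    (g := fun ω => if S ω then (1:ℝ) else 0) hGS_int h1S_int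
  have hcond2 : (μ[(fun ω => (1 - p (X ω)) / p (X ω) * (r (X ω) / c (X ω)))
      * (fun ω => if S ω then (1:ℝ) else 0) | MeasurableSpace.comap X inferInstance])
      =ᵐ[μ] fun ω => (1 - p (X ω)) / p (X ω) * (r (X ω) / c (X ω)) * p (X ω) := by
    filter_upwards [htower2, hpver] with ω h1 h2
    rw [h1, Pi.mul_apply, ← h2]
  have hI4 : ∫ ω, (1 - p (X ω)) / p (X ω) * (r (X ω) / c (X ω))
        * (if S ω then (1:ℝ) else 0) ∂μ
      = ∫ ω, (1 - p (X ω)) / p (X ω) * (r (X ω) / c (X ω)) * p (X ω) ∂μ := by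
    calc ∫ ω, (1 - p (X ω)) / p (X ω) * (r (X ω) / c (X ω))
            * (if S ω then (1:ℝ) else 0) ∂μ
        = ∫ ω, (μ[(fun ω => (1 - p (X ω)) / p (X ω) * (r (X ω) / c (X ω)))
            * (fun ω => if S ω then (1:ℝ) else 0) | MeasurableSpace.comap X inferInstance]) ω ∂μ := (integral_condExp hm).symm
      _ = _ := integral_congr_ae hcond2
  -- drop the propensity weight
  have hGp_ae : (fun ω => (1 - p (X ω)) / p (X ω) * (r (X ω) / c (X ω)) * p (X ω))
      =ᵐ[μ] fun ω => r (X ω) / c (X ω) * (1 - p (X ω)) := by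
    filter_upwards [hppos] with ω h
    have hp' : p (X ω) ≠ 0 := ne_of_gt h.1
    rw [div_mul_eq_mul_div, div_mul_cancel₀ _ hp']
    ring
  -- conditional expectation of the indicator of S = false
  have hcond0 : (μ[fun ω => if S ω then (0:ℝ) else 1 | MeasurableSpace.comap X inferInstance]) =ᵐ[μ] fun ω => 1 - p (X ω) := by
    have heq : (fun ω => if S ω then (0:ℝ) else 1)
        = (fun _ : Ω => (1:ℝ)) - fun ω => if S ω then (1:ℝ) else 0 := by
      funext ω
      by_cases h : S ω = true
      · rw [if_pos h, Pi.sub_apply, if_pos h]; norm_num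
      · rw [if_neg h, Pi.sub_apply, if_neg h]; norm_num
    rw [heq]
    have h2 := condExp_sub (μ := μ) (m := MeasurableSpace.comap X inferInstance) (integrable_const (1:ℝ)) h1S_int
    filter_upwards [h2, hpver] with ω ha' hb'
    rw [ha', Pi.sub_apply, condExp_const hm, ← hb']
  -- the b-side integrability
  have hbind_int : Integrable (s0.indicator fun ω => r (X ω) / c (X ω)) μ := by
    rw [integrable_indicator_iff hms0]
    rw [integrable_cond_iff' hne0 hfin0] at hb_int₀
    exact hb_int₀
  have hind_eq0 : (s0.indicator fun ω => r (X ω) / c (X ω))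
      = fun ω => r (X ω) / c (X ω) * (if S ω then (0:ℝ) else 1) := by
    funext ω
    by_cases h : S ω = true <;>
      simp [Set.indicator_apply, hs0def, Set.mem_setOf_eq, h]
  have h1S0_int : Integrable (fun ω => if S ω then (0:ℝ) else 1) μ := by
    refine ((integrable_const (1:ℝ)).indicator hms0).congr (ae_of_all _ fun ω => ?_)
    by_cases h : S ω = true <;>
      simp [Set.indicator_apply, hs0def, Set.mem_setOf_eq, h]
  have hbI0_int : Integrable ((fun ω => r (X ω) / c (X ω))
      * fun ω => if S ω then (0:ℝ) else 1) μ := by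
    have := hind_eq0 ▸ hbind_int
    exact this
  have hbsm : StronglyMeasurable[MeasurableSpace.comap X inferInstance] fun ω => r (X ω) / c (X ω) := comp_sm (hr.div hc)
  have htower3 := condExp_mul_of_stronglyMeasurable_left (μ := μ) (m := MeasurableSpace.comap X inferInstance) hbsm
    (f := fun ω => r (X ω) / c (X ω)) (g := fun ω => if S ω then (0:ℝ) else 1)
    hbI0_int h1S0_int
  have hcond3 : (μ[(fun ω => r (X ω) / c (X ω))
      * (fun ω => if S ω then (0:ℝ) else 1) | MeasurableSpace.comap X inferInstance])
      =ᵐ[μ] fun ω => r (X ω) / c (X ω) * (1 - p (X ω)) := by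
    filter_upwards [htower3, hcond0] with ω h1 h2
    rw [h1, Pi.mul_apply, h2]
  have hI5 : ∫ ω, r (X ω) / c (X ω) * (if S ω then (0:ℝ) else 1) ∂μ
      = ∫ ω, r (X ω) / c (X ω) * (1 - p (X ω)) ∂μ := by
    calc ∫ ω, r (X ω) / c (X ω) * (if S ω then (0:ℝ) else 1) ∂μ
        = ∫ ω, (μ[(fun ω => r (X ω) / c (X ω))
            * (fun ω => if S ω then (0:ℝ) else 1) | MeasurableSpace.comap X inferInstance]) ω ∂μ := (integral_condExp hm).symm
      _ = _ := integral_congr_ae hcond3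
  -- chain everything
  have hchain : ∫ ω, (if S ω then Real.exp (a (X ω) + η * q (Y ω)) * ℓ (X ω) (Y ω) else 0) ∂μ
      = (μ s0).toReal * ∫ ω, r (X ω) / c (X ω) ∂(μ[|s0]) := by
    calc ∫ ω, (if S ω then Real.exp (a (X ω) + η * q (Y ω)) * ℓ (X ω) (Y ω) else 0) ∂μ
        = ∫ ω, s1.indicator (fun ω => (1 - p (X ω)) / (p (X ω) * c (X ω))
            * (ℓ (X ω) (Y ω) * Real.exp (η * q (Y ω)))) ω ∂μ := integral_congr_ae hae1
      _ = ∫ ω in s1, (1 - p (X ω)) / (p (X ω) * c (X ω))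
            * (ℓ (X ω) (Y ω) * Real.exp (η * q (Y ω))) ∂μ := integral_indicator hms1
      _ = (μ s1).toReal * ∫ ω, (1 - p (X ω)) / (p (X ω) * c (X ω))
            * (ℓ (X ω) (Y ω) * Real.exp (η * q (Y ω))) ∂(μ[|s1]) := by
          rw [integral_cond_eq', ← mul_assoc, mul_inv_cancel₀ htr1, one_mul]
      _ = (μ s1).toReal * ∫ ω, (1 - p (X ω)) / p (X ω) * (r (X ω) / c (X ω)) ∂(μ[|s1]) := by
          rw [hI2]
      _ = ∫ ω in s1, (1 - p (X ω)) / p (X ω) * (r (X ω) / c (X ω)) ∂μ := by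
          rw [integral_cond_eq', ← mul_assoc, mul_inv_cancel₀ htr1, one_mul]
      _ = ∫ ω, s1.indicator (fun ω =>
            (1 - p (X ω)) / p (X ω) * (r (X ω) / c (X ω))) ω ∂μ :=
          (integral_indicator hms1).symm
      _ = ∫ ω, (1 - p (X ω)) / p (X ω) * (r (X ω) / c (X ω))
            * (if S ω then (1:ℝ) else 0) ∂μ := by rw [hind_eq]
      _ = ∫ ω, (1 - p (X ω)) / p (X ω) * (r (X ω) / c (X ω)) * p (X ω) ∂μ := hI4
      _ = ∫ ω, r (X ω) / c (X ω) * (1 - p (X ω)) ∂μ := integral_congr_ae hGp_ae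
      _ = ∫ ω, r (X ω) / c (X ω) * (if S ω then (0:ℝ) else 1) ∂μ := hI5.symm
      _ = ∫ ω, s0.indicator (fun ω => r (X ω) / c (X ω)) ω ∂μ := by rw [hind_eq0]
      _ = ∫ ω in s0, r (X ω) / c (X ω) ∂μ := integral_indicator hms0
      _ = (μ s0).toReal * ∫ ω, r (X ω) / c (X ω) ∂(μ[|s0]) := by
          rw [integral_cond_eq', ← mul_assoc, mul_inv_cancel₀ htr0, one_mul]
  rw [hchain, ← mul_assoc, inv_mul_cancel₀ htr0, one_mul]
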